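/- Let μ ≥ 0, δ ∈ (0,1), and let N ≥ 0 be a real number satisfying N ≥ μ − √(2·μ·log(1/δ)). Then μ ≤ 2·log(1/δ) + N + √(2·N·log(1/δ)). -/
import Mathlib

open Real

/-- Deterministic implication underlying the upper confidence bound: if `μ ≥ 0`,
`δ ∈ (0,1)`, `N ≥ 0` and `N ≥ μ − √(2·μ·log(1/δ))`, then
`μ ≤ 2·log(1/δ) + N + √(2·N·log(1/δ))`. -/
theorem mean_le_Uplus (μ δ N : ℝ) (hμ : 0 ≤ μ) (hδ : δ ∈ Set.Ioo (0 : ℝ) 1) (hN : 0 ≤ N)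
    (h : μ - Real.sqrt (2 * μ * Real.log (1 / δ)) ≤ N) :
    μ ≤ 2 * Real.log (1 / δ) + N + Real.sqrt (2 * N * Real.log (1 / δ)) := by
  set L := Real.log (1 / δ) with hLdef
  have hL : 0 ≤ L := by
    apply Real.log_nonneg
    rw [le_div_iff₀ hδ.1]
    simpa using hδ.2.le
  set a := Real.sqrt (2 * μ * L) with ha
  set b := Real.sqrt (2 * N * L) with hb
  have ha0 : 0 ≤ a := Real.sqrt_nonneg _
  have hb0 : 0 ≤ b := Real.sqrt_nonneg _
  have ha2 : a ^ 2 = 2 * μ * L := Real.sq_sqrt (by positivity)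
  have hb2 : b ^ 2 = 2 * N * L := Real.sq_sqrt (by positivity)
  nlinarith [sq_nonneg (a - 2*L - b), sq_nonneg (a - b), mul_nonneg hL hb0,
    mul_nonneg ha0 hL, mul_nonneg hL hL]
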